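/- Let A be the Jordan plane over a field of characteristic p > 2, with automorphism g given by g(x) = x, g(y) = y + x. The g-invariant elements of the homogeneous component A^n of degree n are exactly the linear span of {x^{n−pℓ} y^{pℓ} : 0 ≤ ℓ ≤ ⌊n/p⌋}. -/

import Mathlib

/-- Defining relation of the Jordan plane `k⟨x,y⟩/(yx - xy + (1/2)x²)`,
with `x = ι 0`, `y = ι 1`. -/
inductive JpRel (K : Type*) [Field K] :
    FreeAlgebra K (Fin 2) → FreeAlgebra K (Fin 2) → Prop
  | comm : JpRel K (FreeAlgebra.ι K (1 : Fin 2) * FreeAlgebra.ι K (0 : Fin 2))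
      (FreeAlgebra.ι K (0 : Fin 2) * FreeAlgebra.ι K (1 : Fin 2)
        - (1/2 : K) • (FreeAlgebra.ι K (0 : Fin 2)) ^ 2)

/-- The Jordan plane. -/
noncomputable abbrev Jp (K : Type*) [Field K] := RingQuot (JpRel K)

noncomputable abbrev Jx (K : Type*) [Field K] : Jp K :=
  RingQuot.mkAlgHom K (JpRel K) (FreeAlgebra.ι K (0 : Fin 2))
noncomputable abbrev Jy (K : Type*) [Field K] : Jp K :=
  RingQuot.mkAlgHom K (JpRel K) (FreeAlgebra.ι K (1 : Fin 2))

open MvPolynomial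

noncomputable section JpAux

variable (K : Type*) [Field K]

def Xop : Module.End K (MvPolynomial (Fin 2) K) :=
  LinearMap.mulLeft K (X 0)

def Yop : Module.End K (MvPolynomial (Fin 2) K) :=
  LinearMap.mulLeft K (X 1)
    - (1/2 : K) • ((LinearMap.mulLeft K (X 0 ^ 2)).comp (pderiv 0).toLinearMap)

lemma Xop_apply (q : MvPolynomial (Fin 2) K) : Xop K q = X 0 * q := rfl

lemma Yop_apply (q : MvPolynomial (Fin 2) K) :
    Yop K q = X 1 * q - (1/2 : K) • (X 0 ^ 2 * pderiv 0 q) := rfl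

lemma op_rel : Yop K * Xop K = Xop K * Yop K - (1/2 : K) • (Xop K) ^ 2 := by
  refine LinearMap.ext fun q => ?_
  simp only [LinearMap.sub_apply, LinearMap.smul_apply, Module.End.mul_apply, pow_two,
    Xop_apply, Yop_apply, Derivation.leibniz, pderiv_X_self, smul_eq_mul, mul_one]
  simp only [smul_add, smul_sub, smul_eq_C_mul]
  ring

end JpAux

noncomputable section JpAux2

variable (K : Type*) [Field K]

/-- The representation of the Jordan plane on polynomials. -/
def JpRep : Jp K →ₐ[K] Module.End K (MvPolynomial (Fin 2) K) :=
  RingQuot.liftAlgHom K ⟨FreeAlgebra.lift K ![Xop K, Yop K], by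
    rintro x y ⟨⟩
    simp only [map_mul, map_sub, map_smul, map_pow, FreeAlgebra.lift_ι_apply,
      Matrix.cons_val_zero, Matrix.cons_val_one, Matrix.head_cons]
    exact op_rel K⟩

lemma JpRep_x : JpRep K (Jx K) = Xop K := by
  rw [Jx, JpRep, RingQuot.liftAlgHom_mkAlgHom_apply, FreeAlgebra.lift_ι_apply]
  rfl

lemma JpRep_y : JpRep K (Jy K) = Yop K := by
  rw [Jy, JpRep, RingQuot.liftAlgHom_mkAlgHom_apply, FreeAlgebra.lift_ι_apply]
  rfl

/-- Evaluation of the representation at 1: sends `x^i y^j` to `X₀^i X₁^j`. -/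
def JpE : Jp K →ₗ[K] MvPolynomial (Fin 2) K where
  toFun a := JpRep K a 1
  map_add' a b := by simp
  map_smul' c a := by simp

lemma Yop_pow_one (j : ℕ) : (Yop K ^ j) 1 = X 1 ^ j := by
  induction j with
  | zero => simp
  | succ k ih =>
    rw [pow_succ', Module.End.mul_apply, ih, Yop_apply, Derivation.leibniz_pow,
      pderiv_X_of_ne (by decide : (1 : Fin 2) ≠ 0)]
    simp [pow_succ']

lemma JpE_mono (i j : ℕ) : JpE K (Jx K ^ i * Jy K ^ j) = X 0 ^ i * X 1 ^ j := by
  show JpRep K _ 1 = _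
  rw [map_mul, map_pow, map_pow, JpRep_x, JpRep_y, Module.End.mul_apply, Yop_pow_one,
    Xop, LinearMap.pow_mulLeft, LinearMap.mulLeft_apply]

lemma Pmono (i j : ℕ) :
    (X (0 : Fin 2) ^ i * X 1 ^ j : MvPolynomial (Fin 2) K)
      = monomial (Finsupp.single 0 i + Finsupp.single 1 j) 1 := by
  rw [X_pow_eq_monomial, X_pow_eq_monomial, monomial_mul, one_mul]

lemma mono_pair_eq (i j i' j' : ℕ) :
    (Finsupp.single (0 : Fin 2) i + Finsupp.single 1 j
      = Finsupp.single 0 i' + Finsupp.single 1 j') ↔ (i = i' ∧ j = j') := by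
  constructor
  · intro h
    have h0 := DFunLike.congr_fun h 0
    have h1 := DFunLike.congr_fun h 1
    simp [Finsupp.single_apply] at h0 h1
    exact ⟨h0, h1⟩
  · rintro ⟨rfl, rfl⟩; rfl

lemma jp_yx : Jy K * Jx K = Jx K * Jy K - (1/2 : K) • Jx K ^ 2 := by
  have h := RingQuot.mkAlgHom_rel K (JpRel.comm (K := K))
  simpa only [map_mul, map_sub, map_smul, map_pow] using h

lemma jp_yxw (w : Jp K) :
    Jy K * (Jx K * w) = Jx K * (Jy K * w) - (1/2 : K) • (Jx K * (Jx K * w)) := by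
  have h := congrArg (· * w) (jp_yx K)
  simp only [sub_mul, smul_mul_assoc, mul_assoc, pow_two] at h
  simpa only [mul_assoc] using h

lemma jp_gy_aux (h2 : (2 : K) ≠ 0) (g : Jp K →ₐ[K] Jp K)
    (hgy : g (Jy K) = Jy K + Jx K) :
    ∀ k : ℕ, g (Jy K ^ (k + 2)) = Jy K ^ (k + 2)
      + ((k + 2 : ℕ) : K) • (Jx K * Jy K ^ (k + 1))
      + (((k + 2 : ℕ) : K) * ((k + 1 : ℕ) : K) / 4) • (Jx K * (Jx K * Jy K ^ k)) := by
  have h4 : (4 : K) ≠ 0 := by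
    have : (4 : K) = 2 * 2 := by norm_num
    rw [this]; exact mul_ne_zero h2 h2
  intro k
  induction k with
  | zero =>
    simp only [Nat.zero_add]
    rw [map_pow, hgy, pow_two]
    simp only [mul_add, add_mul, jp_yx, pow_one, pow_zero, mul_one, pow_two]
    match_scalars <;> field_simp <;> ring
  | succ k ih =>
    rw [show k + 1 + 2 = (k + 2) + 1 by omega, show k + 1 + 1 = k + 2 by omega,
      pow_succ', map_mul, hgy, ih]
    simp only [mul_add, add_mul, mul_smul_comm, smul_mul_assoc, jp_yxw, mul_sub, smul_sub,
      smul_smul, ← pow_succ']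
    match_scalars <;> field_simp <;> ring

lemma jp_g_fix (h2 : (2 : K) ≠ 0) (g : Jp K →ₐ[K] Jp K)
    (hgy : g (Jy K) = Jy K + Jx K) (m : ℕ) (hm : (m : K) = 0) :
    g (Jy K ^ m) = Jy K ^ m := by
  match m with
  | 0 => simp
  | 1 => exact absurd (by exact_mod_cast hm) one_ne_zero
  | (k+2) =>
    rw [jp_gy_aux K h2 g hgy k, hm]
    simp

lemma jp_gw (h2 : (2 : K) ≠ 0) (g : Jp K →ₐ[K] Jp K)
    (hgx : g (Jx K) = Jx K) (hgy : g (Jy K) = Jy K + Jx K) (n m : ℕ) (hm : m ≤ n) :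
    g (Jx K ^ (n - m) * Jy K ^ m) = Jx K ^ (n - m) * Jy K ^ m
      + (m : K) • (Jx K ^ (n - (m - 1)) * Jy K ^ (m - 1))
      + ((m : K) * ((m : K) - 1) / 4) • (Jx K ^ (n - (m - 2)) * Jy K ^ (m - 2)) := by
  rw [map_mul, map_pow, hgx]
  match m with
  | 0 => simp
  | 1 =>
    rw [pow_one, hgy, mul_add]
    rw [show Jx K ^ (n - 1) * Jx K = Jx K ^ (n - 1 + 1) from (pow_succ _ _).symm,
      show n - 1 + 1 = n - 0 by omega]
    simp only [show (1:ℕ) - 1 = 0 from rfl, show (1:ℕ) - 2 = 0 from rfl, pow_zero, mul_one]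
    match_scalars <;> norm_num
  | (k+2) =>
    rw [jp_gy_aux K h2 g hgy k]
    simp only [mul_add, mul_smul_comm, ← mul_assoc, ← pow_succ]
    rw [show n - (k + 2) + 1 = n - (k + 1) by omega,
      show n - (k + 1) + 1 = n - k by omega,
      show k + 2 - 1 = k + 1 from rfl, show k + 2 - 2 = k from rfl]
    match_scalars <;> push_cast <;> ring

end JpAux2

/-- Let `A` be the Jordan plane over a field of characteristic `p > 2`, graded with
`deg x = deg y = 1`, and let `g` be the algebra automorphism with `g(x) = x`,
`g(y) = y + x`.  The `g`-invariant elements of the degree-`n` homogeneous component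
(the span of `{x^{n-m} y^m : 0 ≤ m ≤ n}`) are exactly the linear span of
`{x^{n-pℓ} y^{pℓ} : 0 ≤ ℓ ≤ ⌊n/p⌋}`. -/
theorem stmt18 (p : ℕ) [Fact p.Prime] (hp2 : 2 < p) (K : Type*) [Field K] [CharP K p]
    (g : Jp K →ₐ[K] Jp K) (hgx : g (Jx K) = Jx K) (hgy : g (Jy K) = Jy K + Jx K)
    (n : ℕ) (a : Jp K) :
    (a ∈ Submodule.span K
        (Set.range fun m : Fin (n + 1) => Jx K ^ (n - (m : ℕ)) * Jy K ^ (m : ℕ)) ∧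
      g a = a) ↔
    a ∈ Submodule.span K
        (Set.range fun ℓ : Fin (n / p + 1) => Jx K ^ (n - p * (ℓ : ℕ)) * Jy K ^ (p * (ℓ : ℕ))) := by
  have hp : p.Prime := Fact.out
  have hppos : 0 < p := hp.pos
  have h2 : (2 : K) ≠ 0 := by
    intro h
    have h' : ((2 : ℕ) : K) = 0 := by exact_mod_cast h
    have hdvd := (CharP.cast_eq_zero_iff K p 2).1 h'
    have := Nat.le_of_dvd (by norm_num) hdvd
    omega
  set cc : ℕ → K := fun m => (m : K) * ((m : K) - 1) / 4 with hcc
  constructor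
  · rintro ⟨ha, hfix⟩
    obtain ⟨c, hc⟩ := (Submodule.mem_span_range_iff_exists_fun K).1 ha
    set lam : ℕ → K := fun m => if h : m < n + 1 then c ⟨m, h⟩ else 0 with hlam
    have hlam_top : ∀ m, n < m → lam m = 0 := fun m hm => dif_neg (by omega)
    have hsum : a = ∑ m ∈ Finset.range (n + 1), lam m • (Jx K ^ (n - m) * Jy K ^ m) := by
      rw [← hc, ← Fin.sum_univ_eq_sum_range
        (fun m => lam m • (Jx K ^ (n - m) * Jy K ^ m)) (n + 1)]
      exact Finset.sum_congr rfl fun i _ => by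
        rw [show lam (i : ℕ) = c i from dif_pos i.isLt]
    -- the fundamental identity in the Jordan plane
    have h0 : (0 : Jp K) = ∑ m ∈ Finset.range (n + 1), lam m •
        ((m : K) • (Jx K ^ (n - (m - 1)) * Jy K ^ (m - 1))
          + cc m • (Jx K ^ (n - (m - 2)) * Jy K ^ (m - 2))) := by
      have e1 : g a - a = ∑ m ∈ Finset.range (n + 1), lam m •
          ((m : K) • (Jx K ^ (n - (m - 1)) * Jy K ^ (m - 1))
            + cc m • (Jx K ^ (n - (m - 2)) * Jy K ^ (m - 2))) := by
        rw [hsum, map_sum]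
        simp only [map_smul]
        rw [← Finset.sum_sub_distrib]
        refine Finset.sum_congr rfl fun m hm => ?_
        rw [jp_gw K h2 g hgx hgy n m (Nat.lt_succ_iff.1 (Finset.mem_range.1 hm)), hcc]
        module
      rw [← e1, hfix, sub_self]
    have hE := congrArg (JpE K) h0
    simp only [map_zero, map_sum, map_smul, map_add, JpE_mono] at hE
    -- extract coefficients
    have key : ∀ t, t < n → lam (t + 1) * ((t + 1 : ℕ) : K) + lam (t + 2) * cc (t + 2) = 0 := by
      intro t ht
      have h := congrArg
        (coeff (Finsupp.single (0 : Fin 2) (n - t) + Finsupp.single 1 t)) hE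
      simp only [coeff_zero, coeff_sum, coeff_smul, coeff_add, Pmono, coeff_monomial,
        mono_pair_eq, smul_eq_mul] at h
      have c1 : ∀ m : ℕ,
          (if (n - (m - 1) = n - t ∧ m - 1 = t) then (1 : K) else 0)
            = if m - 1 = t then 1 else 0 :=
        fun m => if_congr ⟨And.right, fun h => ⟨by rw [h], h⟩⟩ rfl rfl
      have c2 : ∀ m : ℕ,
          (if (n - (m - 2) = n - t ∧ m - 2 = t) then (1 : K) else 0)
            = if m - 2 = t then 1 else 0 :=
        fun m => if_congr ⟨And.right, fun h => ⟨by rw [h], h⟩⟩ rfl rfl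
      simp only [c1, c2, mul_ite, mul_one, mul_zero, mul_add, Finset.sum_add_distrib] at h
      have e1 : ∀ m ∈ Finset.range (n + 1),
          (if m - 1 = t then lam m * (m : K) else 0)
            = if m = t + 1 then lam m * (m : K) else 0 := by
        intro m _
        rcases Nat.eq_zero_or_pos m with rfl | hm
        · split_ifs <;> simp
        · have : (m - 1 = t) ↔ (m = t + 1) := by omega
          simp only [this]
      have e2 : ∀ m ∈ Finset.range (n + 1),
          (if m - 2 = t then lam m * cc m else 0)
            = if m = t + 2 then lam m * cc m else 0 := by
        intro m _
        match m with
        | 0 => split_ifs <;> simp [hcc]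
        | 1 => split_ifs <;> simp [hcc] <;> norm_num
        | (k+2) =>
          have : (k + 2 - 2 = t) ↔ (k + 2 = t + 2) := by omega
          simp only [this]
      rw [Finset.sum_congr rfl e1, Finset.sum_congr rfl e2,
        Finset.sum_ite_eq' (Finset.range (n + 1)) (t + 1) (fun m => lam m * (m : K)),
        Finset.sum_ite_eq' (Finset.range (n + 1)) (t + 2) (fun m => lam m * cc m),
        if_pos (Finset.mem_range.2 (by omega))] at h
      by_cases ht2 : t + 2 < n + 1
      · rw [if_pos (Finset.mem_range.2 ht2)] at h
        linear_combination h.symm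
      · rw [if_neg (fun hmem => ht2 (Finset.mem_range.1 hmem)), add_zero] at h
        rw [hlam_top (t + 2) (by omega), zero_mul, add_zero]
        linear_combination h.symm
    -- the recursion: lam m = 0 whenever p ∤ m
    have key2 : ∀ k m, n + 1 ≤ m + k → ¬ p ∣ m → lam m = 0 := by
      intro k
      induction k with
      | zero => exact fun m hm _ => hlam_top m (by omega)
      | succ k ih =>
        intro m hm hpm
        by_cases hmn : n < m
        · exact hlam_top m hmn
        · have hm1 : 1 ≤ m := by
            rcases Nat.eq_zero_or_pos m with rfl | h
            · exact absurd (dvd_zero p) hpm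
            · exact h
          have heq := key (m - 1) (by omega)
          rw [show m - 1 + 1 = m by omega, show m - 1 + 2 = m + 1 by omega] at heq
          have hmK : (m : K) ≠ 0 := by
            rw [Ne, CharP.cast_eq_zero_iff K p]; exact hpm
          by_cases hp1 : p ∣ (m + 1)
          · have hz : cc (m + 1) = 0 := by
              have : ((m + 1 : ℕ) : K) = 0 := (CharP.cast_eq_zero_iff K p _).2 hp1
              simp [hcc, this]
            rw [hz, mul_zero, add_zero] at heq
            exact (mul_eq_zero.1 heq).resolve_right hmK
          · rw [ih (m + 1) (by omega) hp1, zero_mul, add_zero] at heq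
            exact (mul_eq_zero.1 heq).resolve_right hmK
    -- conclude
    rw [hsum]
    refine Submodule.sum_mem _ fun m hm => ?_
    by_cases hpm : p ∣ m
    · obtain ⟨ℓ, rfl⟩ := hpm
      refine Submodule.smul_mem _ _ (Submodule.subset_span ?_)
      refine ⟨⟨ℓ, ?_⟩, rfl⟩
      have hle : p * ℓ ≤ n := Nat.lt_succ_iff.1 (Finset.mem_range.1 hm)
      have : ℓ ≤ n / p := Nat.le_div_iff_mul_le hppos |>.2 (by rw [mul_comm]; exact hle)
      omega
    · rw [key2 (n + 1) m (by omega) hpm, zero_smul]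
      exact Submodule.zero_mem _
  · intro ha
    have hsub : Submodule.span K
        (Set.range fun ℓ : Fin (n / p + 1) => Jx K ^ (n - p * (ℓ : ℕ)) * Jy K ^ (p * (ℓ : ℕ)))
        ≤ Submodule.span K
        (Set.range fun m : Fin (n + 1) => Jx K ^ (n - (m : ℕ)) * Jy K ^ (m : ℕ)) := by
      rw [Submodule.span_le]
      rintro _ ⟨ℓ, rfl⟩
      refine Submodule.subset_span ⟨⟨p * (ℓ : ℕ), ?_⟩, rfl⟩
      have hl : (ℓ : ℕ) ≤ n / p := Nat.lt_succ_iff.1 ℓ.isLt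
      have h1 : p * (ℓ : ℕ) ≤ n := by
        rw [mul_comm]; exact (Nat.le_div_iff_mul_le hppos).1 hl
      omega
    refine ⟨hsub ha, ?_⟩
    have hfixsub : Submodule.span K
        (Set.range fun ℓ : Fin (n / p + 1) => Jx K ^ (n - p * (ℓ : ℕ)) * Jy K ^ (p * (ℓ : ℕ)))
        ≤ LinearMap.ker (g.toLinearMap - LinearMap.id) := by
      rw [Submodule.span_le]
      rintro _ ⟨ℓ, rfl⟩
      rw [SetLike.mem_coe, LinearMap.mem_ker, LinearMap.sub_apply, LinearMap.id_apply,
        sub_eq_zero]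
      show g _ = _
      rw [map_mul, map_pow, hgx,
        jp_g_fix K h2 g hgy (p * (ℓ : ℕ))
          ((CharP.cast_eq_zero_iff K p _).2 ⟨(ℓ : ℕ), rfl⟩)]
    have := hfixsub ha
    rw [LinearMap.mem_ker, LinearMap.sub_apply, LinearMap.id_apply, sub_eq_zero] at this
    exact this
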